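/- Let A ⊆ {1,…,N} satisfy 1 ≤ r_N(A) ≤ (N+1)/2. Then there exists a unique a ∈ A such that π(a + r_N(A) − 1) ∈ A and A ⊆ π({a, a+1, …, a + r_N(A) − 1}). (Existence and uniqueness of the left-most site, as claimed in the Supplemental Material.) -/
import Mathlib


/-- `projN N i` is the unique element of `{1, …, N}` congruent to `i` mod `N`. -/
def projN (N i : ℤ) : ℤ := (i - 1) % N + 1

/-- The cut `s_n` of the chain: `s_n i = i` if `i ≥ n`, and `i + N` if `i < n`. -/
def cutN (N n i : ℤ) : ℤ := if n ≤ i then i else i + N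

/-- The range `r(A) = max A - min A + 1` of a finite nonempty set, with `r(∅) = 0`. -/
def rng (A : Finset ℤ) : ℤ := if h : A.Nonempty then A.max' h - A.min' h + 1 else 0

/-- `r_N(A) = min over n ∈ {1,…,N} of r(s_n(A))`. -/
noncomputable def rN (N : ℤ) (A : Finset ℤ) : ℤ :=
  sInf ((fun n => rng (A.image (cutN N n))) '' Set.Icc 1 N)

lemma projN_dvd (N i : ℤ) : N ∣ projN N i - i := by
  have h : (i - 1) % N = (i - 1) - N * ((i - 1) / N) := Int.emod_def _ _
  refine ⟨-((i - 1) / N), ?_⟩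
  simp only [projN]
  rw [h]; ring

lemma projN_congr {N i j : ℤ} (h : N ∣ i - j) : projN N i = projN N j := by
  unfold projN
  have h0 : ((i - 1) - (j - 1)) % N = 0 := by
    have he : i - 1 - (j - 1) = i - j := by ring
    rw [he]; exact Int.emod_eq_zero_of_dvd h
  rw [Int.emod_eq_emod_iff_emod_sub_eq_zero.mpr h0]

lemma projN_range (N i : ℤ) (hN : 1 ≤ N) : 1 ≤ projN N i ∧ projN N i ≤ N := by
  have h0 := Int.emod_nonneg (i - 1) (by omega : N ≠ 0)
  have h1 := Int.emod_lt_of_pos (i - 1) (by omega : 0 < N)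
  unfold projN; omega

lemma projN_eq_self {N i : ℤ} (h1 : 1 ≤ i) (h2 : i ≤ N) : projN N i = i := by
  unfold projN
  rw [Int.emod_eq_of_lt (by omega) (by omega)]
  ring

lemma projN_cutN {N i : ℤ} (n : ℤ) (h1 : 1 ≤ i) (h2 : i ≤ N) :
    projN N (cutN N n i) = i := by
  unfold cutN
  split
  · exact projN_eq_self h1 h2
  · rw [projN_congr (⟨1, by ring⟩ : N ∣ (i + N) - i)]
    exact projN_eq_self h1 h2

/-- existence and uniqueness of the left-most site: If
`A ⊆ {1,…,N}` and `1 ≤ r_N(A) ≤ (N+1)/2`, then there is a unique `a ∈ A` with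
`π(a + r_N(A) − 1) ∈ A` and `A ⊆ π({a, …, a + r_N(A) − 1})`. -/
theorem leftmost_site_exists_unique (N : ℤ) (hN : 1 ≤ N)
    (A : Finset ℤ) (hA : A ⊆ Finset.Icc 1 N)
    (h1 : 1 ≤ rN N A) (h2 : 2 * rN N A ≤ N + 1) :
    ∃! a, a ∈ A ∧ projN N (a + rN N A - 1) ∈ A ∧
      A ⊆ (Finset.Icc a (a + rN N A - 1)).image (projN N) := by
  have hIccNe : (Set.Icc (1:ℤ) N).Nonempty := Set.nonempty_Icc.mpr hN
  -- A is nonempty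
  have hNe : A.Nonempty := by
    by_contra h
    rw [Finset.not_nonempty_iff_eq_empty] at h
    subst h
    have hz : rN N (∅ : Finset ℤ) = 0 := by
      unfold rN
      have himg : (fun n => rng ((∅ : Finset ℤ).image (cutN N n))) '' Set.Icc 1 N
          = {0} := by
        have hfun : (fun n : ℤ => rng ((∅ : Finset ℤ).image (cutN N n)))
            = fun _ => (0 : ℤ) := by
          funext n; simp [rng]
        rw [hfun]
        exact hIccNe.image_const 0
      rw [himg, csInf_singleton]
    omega
  -- the infimum is attained
  obtain ⟨n, hn, hrn⟩ : ∃ n ∈ Set.Icc (1:ℤ) N, rng (A.image (cutN N n)) = rN N A := by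
    have hfin : ((fun n => rng (A.image (cutN N n))) '' Set.Icc 1 N).Finite :=
      (Set.finite_Icc 1 N).image _
    have hne : ((fun n => rng (A.image (cutN N n))) '' Set.Icc 1 N).Nonempty :=
      hIccNe.image _
    obtain ⟨n, hn1, hn2⟩ := hne.csInf_mem hfin
    exact ⟨n, hn1, hn2⟩
  set r := rN N A with hrdef
  set B := A.image (cutN N n) with hB
  have hBNe : B.Nonempty := hNe.image _
  set m := B.min' hBNe with hm
  set M := B.max' hBNe with hM
  have hMm : M = m + r - 1 := by
    have : rng B = r := hrn
    rw [rng, dif_pos hBNe] at this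
    omega
  -- basic facts about elements of A
  have hbound : ∀ x ∈ A, 1 ≤ x ∧ x ≤ N := by
    intro x hx
    have := hA hx
    rw [Finset.mem_Icc] at this
    exact this
  have hprojB : ∀ x ∈ A, projN N (cutN N n x) = x := by
    intro x hx
    exact projN_cutN n (hbound x hx).1 (hbound x hx).2
  -- the min and max of B project into A
  obtain ⟨xm, hxm, hxmeq⟩ := Finset.mem_image.mp (B.min'_mem hBNe)
  obtain ⟨xM, hxM, hxMeq⟩ := Finset.mem_image.mp (B.max'_mem hBNe)
  have hma : projN N m = xm := by rw [hm, ← hxmeq]; exact hprojB xm hxm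
  have hMa : projN N M = xM := by rw [hM, ← hxMeq]; exact hprojB xM hxM
  refine ⟨projN N m, ⟨?_, ?_, ?_⟩, ?_⟩
  · rw [hma]; exact hxm
  · -- projN (a + r - 1) ∈ A
    have hc : N ∣ (projN N m + r - 1) - M := by
      have := projN_dvd N m
      have he : (projN N m + r - 1) - M = projN N m - m := by omega
      rw [he]; exact this
    rw [projN_congr hc, hMa]; exact hxM
  · -- A ⊆ image
    intro x hx
    have hxB : cutN N n x ∈ B := Finset.mem_image_of_mem _ hx
    have hle1 := B.min'_le _ hxB
    have hle2 := B.le_max' _ hxB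
    obtain ⟨k, hk⟩ := projN_dvd N m
    refine Finset.mem_image.mpr ⟨cutN N n x + N * k, ?_, ?_⟩
    · rw [Finset.mem_Icc]
      constructor <;> omega
    · rw [projN_congr (⟨k, by ring⟩ : N ∣ (cutN N n x + N * k) - cutN N n x)]
      exact hprojB x hx
  · -- uniqueness
    rintro a' ⟨ha', -, hsub'⟩
    have haA : projN N m ∈ A := by rw [hma]; exact hxm
    set a := projN N m with hadef
    -- a' ∈ image from a's interval? We need both directions; derive congruences.
    obtain ⟨y, hy, hyp⟩ := Finset.mem_image.mp (hsub' haA)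
    rw [Finset.mem_Icc] at hy
    have hsub : A ⊆ (Finset.Icc a (a + r - 1)).image (projN N) := by
      intro x hx
      have hxB : cutN N n x ∈ B := Finset.mem_image_of_mem _ hx
      have hle1 := B.min'_le _ hxB
      have hle2 := B.le_max' _ hxB
      obtain ⟨k, hk⟩ := projN_dvd N m
      refine Finset.mem_image.mpr ⟨cutN N n x + N * k, ?_, ?_⟩
      · rw [Finset.mem_Icc]
        constructor <;> omega
      · rw [projN_congr (⟨k, by ring⟩ : N ∣ (cutN N n x + N * k) - cutN N n x)]
        exact hprojB x hx
    obtain ⟨z, hz, hzp⟩ := Finset.mem_image.mp (hsub ha')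
    rw [Finset.mem_Icc] at hz
    -- congruences
    obtain ⟨k1, hk1⟩ := projN_dvd N y   -- N ∣ projN y - y, projN y = a
    obtain ⟨k2, hk2⟩ := projN_dvd N z   -- N ∣ projN z - z, projN z = a'
    rw [hyp] at hk1
    rw [hzp] at hk2
    -- y = a' + j, z = a + j', j + j' ≡ 0 mod N
    have hdvd : N ∣ (y - a') + (z - a) := ⟨-(k1 + k2), by linarith [hk1, hk2]⟩
    have hj : (y - a') + (z - a) = 0 := by
      have hlt : |(y - a') + (z - a)| < N := by
        rw [abs_lt]; constructor <;> omega
      exact Int.eq_zero_of_abs_lt_dvd hdvd hlt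
    -- hence y = a', z = a, so N ∣ a - a'
    have hya : y = a' := by omega
    have hza : z = a := by omega
    have hd : N ∣ a - a' := ⟨k1, by rw [← hya]; exact hk1⟩
    have hb1 := hbound _ haA
    have hb2 := hbound _ ha'
    have : a - a' = 0 := by
      refine Int.eq_zero_of_abs_lt_dvd hd ?_
      rw [abs_lt]; constructor <;> omega
    omega
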